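/- For every natural number n, the number of partitions of n in which every odd part appears exactly once (odd parts are distinct, while even parts may appear with arbitrary multiplicity) equals the number of partitions of n into parts not congruent to 2 modulo 4. -/

import Mathlib

namespace DistinctOddAux

open Multiset

/-- Split a part `i ≡ 2 [MOD 4]` into two equal (odd) halves; keep other parts. -/
def hs (i : ℕ) : Multiset ℕ := if i % 4 = 2 then {i / 2, i / 2} else {i}

lemma sum_hs (i : ℕ) : (hs i).sum = i := by
  unfold hs; split_ifs with hi
  · simp only [Multiset.insert_eq_cons, Multiset.sum_cons, Multiset.sum_singleton]; omega
  · simp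

lemma count_hs_odd (a k : ℕ) (hk : k % 2 = 1) :
    (hs a).count k = 2 * (if 2 * k = a then 1 else 0) + (if k = a then 1 else 0) := by
  unfold hs
  split_ifs with hi <;>
    simp only [Multiset.insert_eq_cons, Multiset.count_cons, Multiset.count_singleton] <;>
    split_ifs <;> omega

lemma count_hs_mod4 (a k : ℕ) (hk : k % 4 = 0) :
    (hs a).count k = if k = a then 1 else 0 := by
  unfold hs
  split_ifs with hi <;>
    simp only [Multiset.insert_eq_cons, Multiset.count_cons, Multiset.count_singleton] <;>
    split_ifs <;> omega

lemma count_hs_two (a k : ℕ) (hk : k % 4 = 2) : (hs a).count k = 0 := by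
  unfold hs
  split_ifs with hi <;>
    simp only [Multiset.insert_eq_cons, Multiset.count_cons, Multiset.count_singleton] <;>
    split_ifs <;> omega

lemma count_bind_odd (s : Multiset ℕ) (k : ℕ) (hk : k % 2 = 1) :
    (s.bind hs).count k = 2 * s.count (2 * k) + s.count k := by
  induction s using Multiset.induction_on with
  | empty => simp
  | cons a s ih =>
    rw [Multiset.cons_bind, Multiset.count_add, ih, Multiset.count_cons, Multiset.count_cons,
      count_hs_odd a k hk]
    split_ifs <;> omega

lemma count_bind_mod4 (s : Multiset ℕ) (k : ℕ) (hk : k % 4 = 0) :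
    (s.bind hs).count k = s.count k := by
  induction s using Multiset.induction_on with
  | empty => simp
  | cons a s ih =>
    rw [Multiset.cons_bind, Multiset.count_add, ih, Multiset.count_cons,
      count_hs_mod4 a k hk]
    split_ifs <;> omega

lemma count_bind_two (s : Multiset ℕ) (k : ℕ) (hk : k % 4 = 2) :
    (s.bind hs).count k = 0 := by
  induction s using Multiset.induction_on with
  | empty => simp
  | cons a s ih =>
    rw [Multiset.cons_bind, Multiset.count_add, ih, count_hs_two a k hk]

/-- Merge pairs of equal odd parts of `t` into doubled parts. -/
def mergeOdd (t : Multiset ℕ) : Multiset ℕ :=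
  ∑ k ∈ t.toFinset,
    (Multiset.replicate (t.count k % 2) k + Multiset.replicate (t.count k / 2) (2 * k))

lemma sum_mergeOdd (t : Multiset ℕ) : (mergeOdd t).sum = t.sum := by
  have hsum : ∀ (s : Finset ℕ) (f : ℕ → Multiset ℕ), (∑ k ∈ s, f k).sum = ∑ k ∈ s, (f k).sum :=
    fun s f => map_sum Multiset.sumAddMonoidHom f s
  conv_rhs => rw [← Multiset.toFinset_sum_count_nsmul_eq t]
  rw [mergeOdd, hsum, hsum]
  apply Finset.sum_congr rfl
  intro k _
  simp only [Multiset.sum_add, Multiset.sum_replicate, Multiset.nsmul_singleton, smul_eq_mul]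
  have h1 : t.count k % 2 + 2 * (t.count k / 2) = t.count k := by omega
  calc t.count k % 2 * k + t.count k / 2 * (2 * k)
      = (t.count k % 2 + 2 * (t.count k / 2)) * k := by ring
    _ = t.count k * k := by rw [h1]

lemma mem_mergeOdd {t : Multiset ℕ} {i : ℕ} (hi : i ∈ mergeOdd t) :
    ∃ k ∈ t, i = k ∨ i = 2 * k := by
  rw [mergeOdd] at hi
  rcases Multiset.mem_sum.1 hi with ⟨k, hk, hik⟩
  refine ⟨k, Multiset.mem_toFinset.1 hk, ?_⟩
  rcases Multiset.mem_add.1 hik with h | h <;>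
    [exact Or.inl (Multiset.eq_of_mem_replicate h);
     exact Or.inr (Multiset.eq_of_mem_replicate h)]

lemma count_mergeOdd_odd (t : Multiset ℕ) (k : ℕ) (hk : k % 2 = 1) :
    (mergeOdd t).count k = t.count k % 2 := by
  rw [mergeOdd, Multiset.count_sum']
  have h0 : ∀ j : ℕ,
      (Multiset.replicate (t.count j % 2) j + Multiset.replicate (t.count j / 2) (2 * j)).count k
        = if k = j then t.count j % 2 else 0 := by
    intro j
    rw [Multiset.count_add, Multiset.count_replicate, Multiset.count_replicate]
    split_ifs <;> omega
  simp only [h0]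
  rw [Finset.sum_ite_eq]
  split_ifs with h
  · rfl
  · have : t.count k = 0 := Multiset.count_eq_zero_of_notMem (fun hm => h (Multiset.mem_toFinset.2 hm))
    omega

lemma count_mergeOdd_two (t : Multiset ℕ) (ht : ∀ i ∈ t, i % 2 = 1) (k : ℕ) (hk : k % 2 = 1) :
    (mergeOdd t).count (2 * k) = t.count k / 2 := by
  rw [mergeOdd, Multiset.count_sum']
  have h0 : ∀ j ∈ t.toFinset,
      (Multiset.replicate (t.count j % 2) j + Multiset.replicate (t.count j / 2) (2 * j)).count (2 * k)
        = if k = j then t.count j / 2 else 0 := by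
    intro j hj
    have hjodd : j % 2 = 1 := ht j (Multiset.mem_toFinset.1 hj)
    rw [Multiset.count_add, Multiset.count_replicate, Multiset.count_replicate]
    split_ifs <;> omega
  rw [Finset.sum_congr rfl h0, Finset.sum_ite_eq]
  split_ifs with h
  · rfl
  · have : t.count k = 0 := Multiset.count_eq_zero_of_notMem (fun hm => h (Multiset.mem_toFinset.2 hm))
    omega

lemma count_mergeOdd_mod4 (t : Multiset ℕ) (ht : ∀ i ∈ t, i % 2 = 1) (k : ℕ) (hk : k % 4 = 0) :
    (mergeOdd t).count k = 0 := by
  rw [mergeOdd, Multiset.count_sum']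
  have h0 : ∀ j ∈ t.toFinset,
      (Multiset.replicate (t.count j % 2) j + Multiset.replicate (t.count j / 2) (2 * j)).count k
        = 0 := by
    intro j hj
    have hjodd : j % 2 = 1 := ht j (Multiset.mem_toFinset.1 hj)
    rw [Multiset.count_add, Multiset.count_replicate, Multiset.count_replicate]
    split_ifs <;> omega
  rw [Finset.sum_congr rfl h0, Finset.sum_const, smul_zero]

/-- The splitting map on partitions. -/
def splitPart {n : ℕ} (p : n.Partition) : n.Partition where
  parts := p.parts.bind hs
  parts_pos := by
    intro i hi
    rcases Multiset.mem_bind.1 hi with ⟨a, ha, hia⟩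
    have hpos := p.parts_pos ha
    unfold hs at hia
    split_ifs at hia with h4 <;>
      simp only [Multiset.insert_eq_cons, Multiset.mem_cons, Multiset.mem_singleton] at hia <;>
      omega
  parts_sum := by
    rw [Multiset.sum_bind,
      Multiset.map_congr rfl (fun a _ => sum_hs a), Multiset.map_id']
    exact p.parts_sum

end DistinctOddAux

open DistinctOddAux Multiset in
/-- The number of partitions of `n` in which every odd part appears exactly once
(even parts unrestricted) equals the number of partitions of `n` into parts not
congruent to 2 modulo 4. -/
theorem distinct_odd_parts_eq_not_two_mod_four (n : ℕ) :
    Nat.card {p : n.Partition // ∀ i ∈ p.parts, Odd i → p.parts.count i = 1} =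
      Nat.card {p : n.Partition // ∀ i ∈ p.parts, i % 4 ≠ 2} := by
  have count_le_one : ∀ (p : n.Partition),
      (∀ i ∈ p.parts, Odd i → p.parts.count i = 1) → ∀ j, j % 2 = 1 → p.parts.count j ≤ 1 := by
    intro p hp j hj
    by_cases hm : j ∈ p.parts
    · exact le_of_eq (hp j hm (Nat.odd_iff.2 hj))
    · rw [Multiset.count_eq_zero_of_notMem hm]; omega
  refine Nat.card_eq_of_bijective
    (fun p => ⟨splitPart p.1, ?_⟩) ⟨?_, ?_⟩
  · -- the image has no parts ≡ 2 mod 4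
    intro i hi h2
    have h0 : (p.1.parts.bind hs).count i = 0 := count_bind_two _ i (by omega)
    have : i ∈ p.1.parts.bind hs := hi
    rw [← Multiset.count_pos] at this
    omega
  · -- injectivity
    rintro ⟨p1, hp1⟩ ⟨p2, hp2⟩ hq
    have hparts : p1.parts.bind hs = p2.parts.bind hs := by
      have := congrArg (fun q => q.1.parts) hq
      simpa [splitPart] using this
    have key : ∀ j, j % 2 = 1 →
        p1.parts.count j = p2.parts.count j ∧ p1.parts.count (2 * j) = p2.parts.count (2 * j) := by
      intro j hj
      have e := congrArg (Multiset.count j) hparts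
      rw [count_bind_odd _ j hj, count_bind_odd _ j hj] at e
      have b1 := count_le_one p1 hp1 j hj
      have b2 := count_le_one p2 hp2 j hj
      omega
    apply Subtype.ext
    apply Nat.Partition.ext
    ext k
    rcases (by omega : k % 4 = 0 ∨ k % 4 = 1 ∨ k % 4 = 2 ∨ k % 4 = 3) with h | h | h | h
    · have e := congrArg (Multiset.count k) hparts
      rwa [count_bind_mod4 _ k h, count_bind_mod4 _ k h] at e
    · exact (key k (by omega)).1
    · have hj : (k / 2) % 2 = 1 := by omega
      have h2 : 2 * (k / 2) = k := by omega
      have := (key (k / 2) hj).2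
      rwa [h2] at this
    · exact (key k (by omega)).1
  · -- surjectivity
    rintro ⟨q, hq⟩
    set t := q.parts.filter (fun i => i % 2 = 1) with htdef
    set e := q.parts.filter (fun i => ¬ i % 2 = 1) with hedef
    have hte : t + e = q.parts := Multiset.filter_add_not _ _
    have ht : ∀ i ∈ t, i % 2 = 1 := fun i hi => (Multiset.mem_filter.1 hi).2
    have hq2 : ∀ k, k % 4 = 2 → q.parts.count k = 0 := by
      intro k hk
      exact Multiset.count_eq_zero_of_notMem (fun hm => hq k hm hk)
    have hcount_t : ∀ k, k % 2 = 1 → t.count k = q.parts.count k := by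
      intro k hk
      rw [htdef, Multiset.count_filter, if_pos hk]
    have hcount_e_odd : ∀ k, k % 2 = 1 → e.count k = 0 := by
      intro k hk
      rw [hedef, Multiset.count_filter, if_neg (by omega)]
    have hcount_e_even : ∀ k, k % 2 = 0 → e.count k = q.parts.count k := by
      intro k hk
      rw [hedef, Multiset.count_filter, if_pos (by omega)]
    refine ⟨⟨⟨e + mergeOdd t, ?_, ?_⟩, ?_⟩, ?_⟩
    · -- positivity
      intro i hi
      rcases Multiset.mem_add.1 hi with hie | him
      · exact q.parts_pos (Multiset.mem_filter.1 hie).1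
      · rcases mem_mergeOdd him with ⟨k, hk, hik⟩
        have := q.parts_pos (Multiset.mem_filter.1 hk).1
        omega
    · -- sum
      rw [Multiset.sum_add, sum_mergeOdd, ← q.parts_sum, ← hte, Multiset.sum_add]
      omega
    · -- odd parts appear once
      intro i hi hodd
      have hio : i % 2 = 1 := Nat.odd_iff.1 hodd
      have hc : (e + mergeOdd t).count i = t.count i % 2 := by
        rw [Multiset.count_add, hcount_e_odd i hio, count_mergeOdd_odd t i hio]
        omega
      have hmem : i ∈ (e + mergeOdd t) := hi
      rw [← Multiset.count_pos] at hmem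
      show (e + mergeOdd t).count i = 1
      omega
    · -- maps to q
      apply Subtype.ext
      apply Nat.Partition.ext
      show (e + mergeOdd t).bind hs = q.parts
      ext k
      rcases (by omega : k % 4 = 0 ∨ k % 4 = 1 ∨ k % 4 = 2 ∨ k % 4 = 3) with h | h | h | h
      · rw [count_bind_mod4 _ k h, Multiset.count_add, hcount_e_even k (by omega),
          count_mergeOdd_mod4 t ht k h, add_zero]
      · have hk2 : k % 2 = 1 := by omega
        rw [count_bind_odd _ k hk2, Multiset.count_add, Multiset.count_add,
          hcount_e_odd k hk2, hcount_e_even (2 * k) (by omega), hq2 (2 * k) (by omega),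
          count_mergeOdd_odd t k hk2, count_mergeOdd_two t ht k hk2, hcount_t k hk2]
        omega
      · rw [count_bind_two _ k h, hq2 k h]
      · have hk2 : k % 2 = 1 := by omega
        rw [count_bind_odd _ k hk2, Multiset.count_add, Multiset.count_add,
          hcount_e_odd k hk2, hcount_e_even (2 * k) (by omega), hq2 (2 * k) (by omega),
          count_mergeOdd_odd t k hk2, count_mergeOdd_two t ht k hk2, hcount_t k hk2]
        omega
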